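/- Let p ≥ 0 be a real number and let F, G : Γ → ℂ satisfy ∑_{σ ∈ Γ} λ_σ^{-2p} |F(σ)|² < ∞ and ∑_{σ ∈ Γ} λ_σ^{-2p} |G(σ)|² < ∞. Then the covariance identity holds: ∑_{σ ∈ Γ} λ_σ^{-2p} (F(σ) − (𝔈F)(σ)) · conj(G(σ) − (𝔈G)(σ)) = ∑_{k=0}^{∞} ( ∑_{σ ∈ Γ} λ_σ^{-2p} (𝔈_k(𝔞_k†(𝔞_k F)))(σ) · conj((𝔈_k(𝔞_k†(𝔞_k G)))(σ)) ), where all series converge absolutely. -/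

import Mathlib

open scoped BigOperators ComplexConjugate

/-- `λ_σ = ∏_{k ∈ σ} (k+1)`, with `λ_∅ = 1`. -/
noncomputable def lam (σ : Finset ℕ) : ℝ := ∏ k ∈ σ, ((k : ℝ) + 1)

/-- The annihilation operator: `(𝔞_k F)(σ) = F(σ ∪ {k})` if `k ∉ σ`, else `0`. -/
def ann (k : ℕ) (F : Finset ℕ → ℂ) : Finset ℕ → ℂ :=
  fun σ => if k ∈ σ then 0 else F (insert k σ)

/-- The creation operator: `(𝔞_k† F)(σ) = F(σ \ {k})` if `k ∈ σ`, else `0`. -/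
def cre (k : ℕ) (F : Finset ℕ → ℂ) : Finset ℕ → ℂ :=
  fun σ => if k ∈ σ then F (σ.erase k) else 0

/-- The conditional expectation operator:
`(𝔈_k F)(σ) = F(σ)` if every `j ∈ σ` satisfies `j ≤ k`, else `0`. -/
def cexp (k : ℕ) (F : Finset ℕ → ℂ) : Finset ℕ → ℂ :=
  fun σ => if ∀ j ∈ σ, j ≤ k then F σ else 0

/-- The expectation operator: `(𝔈 F)(σ) = F(∅)` if `σ = ∅`, else `0`. -/
def expec (F : Finset ℕ → ℂ) : Finset ℕ → ℂ :=
  fun σ => if σ = ∅ then F ∅ else 0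

lemma lam_pos (σ : Finset ℕ) : 0 < lam σ := by
  unfold lam
  positivity

lemma Tk_eq (k : ℕ) (F : Finset ℕ → ℂ) (σ : Finset ℕ) :
    cexp k (cre k (ann k F)) σ = if k ∈ σ ∧ ∀ j ∈ σ, j ≤ k then F σ else 0 := by
  simp only [cexp, cre, ann]
  by_cases h1 : ∀ j ∈ σ, j ≤ k
  · by_cases h2 : k ∈ σ
    · simp [h1, h2, Finset.insert_erase h2, Finset.notMem_erase]
    · simp [h1, h2]
  · simp [h1]

lemma max_char (σ : Finset ℕ) (hn : σ.Nonempty) (k : ℕ) :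
    (k ∈ σ ∧ ∀ j ∈ σ, j ≤ k) ↔ k = σ.max' hn := by
  constructor
  · rintro ⟨hk, hall⟩
    exact le_antisymm (Finset.le_max' σ k hk) (hall _ (Finset.max'_mem σ hn))
  · rintro rfl
    exact ⟨Finset.max'_mem σ hn, fun j hj => Finset.le_max' σ j hj⟩

/-- The covariance identity
`Cov_p(F, G) = ∑_{k=0}^∞ ⟨𝔈_k 𝔞_k† 𝔞_k F, 𝔈_k 𝔞_k† 𝔞_k G⟩_{-p}`,
with all the series converging absolutely. -/
theorem stmt13 (p : ℝ) (hp : 0 ≤ p) (F G : Finset ℕ → ℂ)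
    (hF : Summable (fun σ : Finset ℕ => lam σ ^ (-(2 * p)) * ‖F σ‖ ^ 2))
    (hG : Summable (fun σ : Finset ℕ => lam σ ^ (-(2 * p)) * ‖G σ‖ ^ 2)) :
    Summable (fun σ : Finset ℕ =>
      ‖(↑(lam σ ^ (-(2 * p))) : ℂ) * ((F σ - expec F σ) * conj (G σ - expec G σ))‖) ∧
    (∀ k : ℕ, Summable (fun σ : Finset ℕ =>
      ‖(↑(lam σ ^ (-(2 * p))) : ℂ) *
        (cexp k (cre k (ann k F)) σ * conj (cexp k (cre k (ann k G)) σ))‖)) ∧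
    Summable (fun k : ℕ =>
      ‖∑' σ : Finset ℕ, (↑(lam σ ^ (-(2 * p))) : ℂ) *
        (cexp k (cre k (ann k F)) σ * conj (cexp k (cre k (ann k G)) σ))‖) ∧
    (∑' σ : Finset ℕ, (↑(lam σ ^ (-(2 * p))) : ℂ) *
        ((F σ - expec F σ) * conj (G σ - expec G σ)))
      = ∑' k : ℕ, ∑' σ : Finset ℕ, (↑(lam σ ^ (-(2 * p))) : ℂ) *
          (cexp k (cre k (ann k F)) σ * conj (cexp k (cre k (ann k G)) σ)) := by
  classical
  have hwpos : ∀ σ : Finset ℕ, 0 < lam σ ^ (-(2 * p)) :=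
    fun σ => Real.rpow_pos_of_pos (lam_pos σ) _
  set H : Finset ℕ → ℂ := fun σ => (↑(lam σ ^ (-(2 * p))) : ℂ) * (F σ * conj (G σ))
    with hHdef
  have hHnorm : ∀ σ, ‖H σ‖
      = lam σ ^ (-(2 * p)) * (‖F σ‖ * ‖G σ‖) := by
    intro σ
    simp [hHdef, norm_mul, Complex.norm_real, Complex.norm_conj, Real.norm_eq_abs,
      abs_of_pos (hwpos σ)]
  have hHsum : Summable fun σ => ‖H σ‖ := by
    refine Summable.of_nonneg_of_le (fun σ => norm_nonneg _) (fun σ => ?_)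
      ((hF.add hG).div_const 2)
    rw [hHnorm σ]
    have h1 := sq_nonneg (‖F σ‖ - ‖G σ‖)
    have h2 := (hwpos σ).le
    nlinarith [mul_nonneg h2 h1]
  -- the function on pairs
  set g : Finset ℕ × ℕ → ℂ :=
    fun x => if x.2 ∈ x.1 ∧ ∀ j ∈ x.1, j ≤ x.2 then H x.1 else 0 with hgdef
  -- the summand of the left-hand side equals `H` off `∅`
  have hL : ∀ σ : Finset ℕ,
      (↑(lam σ ^ (-(2 * p))) : ℂ) * ((F σ - expec F σ) * conj (G σ - expec G σ))
        = if σ = ∅ then 0 else H σ := by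
    intro σ
    by_cases h : σ = ∅ <;> simp [expec, h, hHdef]
  -- the summand of the right-hand side equals `g`
  have hA : ∀ (k : ℕ) (σ : Finset ℕ),
      (↑(lam σ ^ (-(2 * p))) : ℂ) *
        (cexp k (cre k (ann k F)) σ * conj (cexp k (cre k (ann k G)) σ)) = g (σ, k) := by
    intro k σ
    rw [Tk_eq, Tk_eq]
    simp only [hgdef]
    split_ifs with h <;> simp [hHdef]
  -- row sums (over k, for fixed σ)
  have hrow : ∀ σ : Finset ℕ,
      HasSum (fun k => g (σ, k)) (if σ = ∅ then 0 else H σ) := by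
    intro σ
    by_cases hσ : σ = ∅
    · rw [if_pos hσ]
      have : (fun k => g (σ, k)) = fun _ => 0 := by
        funext k; simp [hgdef, hσ]
      rw [this]; exact hasSum_zero
    · have hn : σ.Nonempty := Finset.nonempty_iff_ne_empty.2 hσ
      rw [if_neg hσ]
      have : (fun k => g (σ, k)) = fun k => if k = σ.max' hn then H σ else 0 := by
        funext k
        simp only [hgdef]
        exact if_congr (max_char σ hn k) rfl rfl
      rw [this]
      exact hasSum_ite_eq _ _
  have hrown : ∀ σ : Finset ℕ,
      HasSum (fun k => ‖g (σ, k)‖) (if σ = ∅ then 0 else ‖H σ‖) := by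
    intro σ
    by_cases hσ : σ = ∅
    · rw [if_pos hσ]
      have : (fun k => ‖g (σ, k)‖) = fun _ => 0 := by
        funext k; simp [hgdef, hσ]
      rw [this]; exact hasSum_zero
    · have hn : σ.Nonempty := Finset.nonempty_iff_ne_empty.2 hσ
      rw [if_neg hσ]
      have : (fun k => ‖g (σ, k)‖) = fun k => if k = σ.max' hn then ‖H σ‖ else 0 := by
        funext k
        simp only [hgdef]
        rw [if_congr (max_char σ hn k) rfl rfl, apply_ite norm, norm_zero]
      rw [this]
      exact hasSum_ite_eq _ _
  -- summability of the norms on the product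
  have hcolsum : Summable fun σ : Finset ℕ => ∑' k : ℕ, ‖g (σ, k)‖ := by
    have : (fun σ : Finset ℕ => ∑' k : ℕ, ‖g (σ, k)‖)
        = fun σ => if σ = ∅ then 0 else ‖H σ‖ :=
      funext fun σ => (hrown σ).tsum_eq
    rw [this]
    refine Summable.of_nonneg_of_le (fun σ => ?_) (fun σ => ?_) hHsum
    · split_ifs <;> [rfl; exact norm_nonneg _]
    · split_ifs <;> [exact norm_nonneg _; rfl]
  have hgnorm : Summable fun x : Finset ℕ × ℕ => ‖g x‖ :=
    (summable_prod_of_nonneg (fun _ => norm_nonneg _)).2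
      ⟨fun σ => (hrown σ).summable, hcolsum⟩
  have hg : Summable g := hgnorm.of_norm
  -- per-k slice summability (in norm)
  have hslice : ∀ k : ℕ, Summable fun σ : Finset ℕ => ‖g (σ, k)‖ := by
    intro k
    refine Summable.of_nonneg_of_le (fun σ => norm_nonneg _) (fun σ => ?_) hHsum
    simp only [hgdef]
    split_ifs <;> simp
  -- column sums over σ, summable in k
  have hcols : Summable fun k : ℕ => ∑' σ : Finset ℕ, ‖g (σ, k)‖ := by
    have h := hgnorm.prod_symm
    exact ((summable_prod_of_nonneg (fun _ => norm_nonneg _)).1 h).2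
  refine ⟨?_, ?_, ?_, ?_⟩
  · -- (a)
    refine Summable.of_nonneg_of_le (fun σ => norm_nonneg _) (fun σ => ?_) hHsum
    rw [hL σ]
    split_ifs <;> simp
  · -- (b)
    intro k
    refine (hslice k).congr fun σ => ?_
    rw [hA k σ]
  · -- (c)
    refine Summable.of_nonneg_of_le (fun k => norm_nonneg _) (fun k => ?_) hcols
    have h1 : (fun σ : Finset ℕ => (↑(lam σ ^ (-(2 * p))) : ℂ) *
        (cexp k (cre k (ann k F)) σ * conj (cexp k (cre k (ann k G)) σ)))
        = fun σ => g (σ, k) := funext fun σ => hA k σ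
    rw [h1]
    exact norm_tsum_le_tsum_norm (hslice k)
  · -- (d)
    have h1 : (fun σ : Finset ℕ => (↑(lam σ ^ (-(2 * p))) : ℂ) *
          ((F σ - expec F σ) * conj (G σ - expec G σ)))
        = fun σ => ∑' k : ℕ, g (σ, k) := by
      funext σ
      rw [hL σ, (hrow σ).tsum_eq]
    have h2 : ∀ k : ℕ, (fun σ : Finset ℕ => (↑(lam σ ^ (-(2 * p))) : ℂ) *
          (cexp k (cre k (ann k F)) σ * conj (cexp k (cre k (ann k G)) σ)))
        = fun σ => g (σ, k) := fun k => funext fun σ => hA k σ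
    calc (∑' σ : Finset ℕ, (↑(lam σ ^ (-(2 * p))) : ℂ) *
          ((F σ - expec F σ) * conj (G σ - expec G σ)))
        = ∑' σ : Finset ℕ, ∑' k : ℕ, g (σ, k) := by rw [h1]
      _ = ∑' k : ℕ, ∑' σ : Finset ℕ, g (σ, k) := by
          refine (Summable.tsum_comm' (f := fun σ k => g (σ, k)) hg ?_ ?_).symm
          · exact fun σ => (hrow σ).summable
          · exact fun k => (hslice k).of_norm
      _ = ∑' k : ℕ, ∑' σ : Finset ℕ, (↑(lam σ ^ (-(2 * p))) : ℂ) *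
            (cexp k (cre k (ann k F)) σ * conj (cexp k (cre k (ann k G)) σ)) := by
          congr 1
          funext k
          rw [h2 k]
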